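/- Let 𝔬 be an acyclic orientation of a finite simple graph G with vertex set V of size n, and let ω : V → {1,…,n} be a bijective labeling such that (a) ω is decreasing along directed paths: if there is a directed path from u to v then ω(u) > ω(v), and (b) sinks receive the smallest labels: every sink v (with s = number of sinks) satisfies ω(v) ≤ s. Let L'(𝔬,ω) be the set of permutations [ω(v_1),…,ω(v_n)] arising from orderings v_1,…,v_n of V such that whenever there is a directed path in 𝔬 from v_i to v_j then i < j. Then for each 1 ≤ k ≤ n, the number of permutations σ ∈ L'(𝔬,ω) with descent set Des(σ) = {1,2,…,n−k} equals C(s−1, k−1), where s = snk(𝔬) is the number of sinks of 𝔬. -/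

import Mathlib

/-- A vertex is a sink of the orientation `r` if it has no outgoing directed edge. -/
def IsSink {V : Type} (r : V → V → Prop) (v : V) : Prop := ∀ u : V, ¬ r v u

/-- The descent set of a word `σ : Fin n → Fin n` (0-indexed). -/
def Des {n : ℕ} (σ : Fin n → Fin n) : Set ℕ :=
  {i | ∃ hi : i + 1 < n, σ ⟨i + 1, hi⟩ < σ ⟨i, Nat.lt_of_succ_lt hi⟩}

/-- `σ` belongs to `L'(𝔬, ω)`: reading the vertices `ω.symm (σ 0), …, ω.symm (σ (n-1))` gives
an ordering of `V` such that whenever there is a directed path from `ω.symm (σ i)` to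
`ω.symm (σ j)` in the orientation `r`, we have `i < j`. -/
def InLE {V : Type} {n : ℕ} (r : V → V → Prop) (ω : V ≃ Fin n) (σ : Equiv.Perm (Fin n)) :
    Prop :=
  ∀ i j : Fin n, Relation.TransGen r (ω.symm (σ i)) (ω.symm (σ j)) → i < j

namespace Stmt4Aux

open Finset

lemma orderEmb_congr {α : Type*} [LinearOrder α] (s : Finset α) {c : ℕ} (h : s.card = c)
    {a b : ℕ} (ha : a < c) (hb : b < c) (hab : a = b) :
    s.orderEmbOfFin h ⟨a, ha⟩ = s.orderEmbOfFin h ⟨b, hb⟩ := by subst hab; rfl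

lemma lt_of_steps {n : ℕ} {α : Type*} [Preorder α] (f : Fin n → α) :
    ∀ b a : ℕ, (hb : b < n) → (hab : a < b) →
      (∀ i, a ≤ i → (h2 : i < b) → f ⟨i + 1, by omega⟩ < f ⟨i, by omega⟩) →
      f ⟨b, hb⟩ < f ⟨a, by omega⟩ := by
  intro b
  induction b with
  | zero => intro a hb hab _; exact absurd hab (Nat.not_lt_zero a)
  | succ b ih =>
    intro a hb hab step
    rcases Nat.lt_or_ge a b with h | h
    · exact lt_trans (step b (by omega) (by omega))
        (ih a (by omega) h (fun i h1 h2 => step i h1 (by omega)))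
    · have : a = b := by omega
      subst this
      exact step a le_rfl (by omega)

lemma gt_of_steps {n : ℕ} {α : Type*} [Preorder α] (f : Fin n → α) :
    ∀ b a : ℕ, (hb : b < n) → (hab : a < b) →
      (∀ i, a ≤ i → (h2 : i < b) → f ⟨i, by omega⟩ < f ⟨i + 1, by omega⟩) →
      f ⟨a, by omega⟩ < f ⟨b, hb⟩ := by
  intro b
  induction b with
  | zero => intro a hb hab _; exact absurd hab (Nat.not_lt_zero a)
  | succ b ih =>
    intro a hb hab step
    rcases Nat.lt_or_ge a b with h | h
    · exact lt_trans (ih a (by omega) h (fun i h1 h2 => step i h1 (by omega)))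
        (step b (by omega) (by omega))
    · have : a = b := by omega
      subst this
      exact step a le_rfl (by omega)

lemma card_compl_eq {n : ℕ} (m : ℕ) (hm : m < n) (D : Finset (Fin n))
    (hD : D.card = n - m) : Dᶜ.card = m := by
  rw [card_compl, hD, Fintype.card_fin]; omega

def bp {n : ℕ} (m : ℕ) (hm : m < n) (D : Finset (Fin n)) (hD : D.card = n - m) :
    Fin n → Fin n := fun i =>
  if h : (i : ℕ) < m then
    Dᶜ.orderEmbOfFin (card_compl_eq m hm D hD) ⟨m - 1 - (i : ℕ), by omega⟩
  else
    D.orderEmbOfFin hD ⟨(i : ℕ) - m, by have := i.isLt; omega⟩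

variable {n : ℕ} (m : ℕ) (hm : m < n) (D : Finset (Fin n)) (hD : D.card = n - m)

lemma bp_apply_lt {i : Fin n} (h : (i : ℕ) < m) :
    bp m hm D hD i = Dᶜ.orderEmbOfFin (card_compl_eq m hm D hD) ⟨m - 1 - (i : ℕ), by omega⟩ :=
  dif_pos h

lemma bp_apply_ge {i : Fin n} (h : ¬ (i : ℕ) < m) :
    bp m hm D hD i = D.orderEmbOfFin hD ⟨(i : ℕ) - m, by have := i.isLt; omega⟩ :=
  dif_neg h

lemma bp_mem_compl {i : Fin n} (h : (i : ℕ) < m) : bp m hm D hD i ∈ Dᶜ := by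
  rw [bp_apply_lt m hm D hD h]; exact orderEmbOfFin_mem _ _ _

lemma bp_mem {i : Fin n} (h : ¬ (i : ℕ) < m) : bp m hm D hD i ∈ D := by
  rw [bp_apply_ge m hm D hD h]; exact orderEmbOfFin_mem _ _ _

lemma bp_anti {i j : Fin n} (hij : (i : ℕ) < j) (hj : (j : ℕ) < m) :
    bp m hm D hD j < bp m hm D hD i := by
  rw [bp_apply_lt m hm D hD hj, bp_apply_lt m hm D hD (lt_trans hij hj)]
  exact (Dᶜ.orderEmbOfFin _).strictMono (by rw [Fin.mk_lt_mk]; omega)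

lemma bp_mono {i j : Fin n} (hi : ¬ (i : ℕ) < m) (hij : (i : ℕ) < j) :
    bp m hm D hD i < bp m hm D hD j := by
  rw [bp_apply_ge m hm D hD hi, bp_apply_ge m hm D hD (by omega)]
  exact (D.orderEmbOfFin hD).strictMono (by rw [Fin.mk_lt_mk]; have := i.isLt; omega)

lemma bp_valley [NeZero n] (h0 : (0 : Fin n) ∈ D) {j : Fin n} (hj : (j : ℕ) = m) :
    bp m hm D hD j = 0 := by
  have h0' : 0 < n - m := by omega
  have hmin : D.orderEmbOfFin hD ⟨0, h0'⟩ = 0 := by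
    rw [Finset.orderEmbOfFin_zero]
    exact le_antisymm (min'_le _ _ h0) (Fin.zero_le _)
  rw [bp_apply_ge m hm D hD (by omega)]
  exact (orderEmb_congr D hD _ h0' (by omega)).trans hmin

lemma bp_injective : Function.Injective (bp m hm D hD) := by
  intro i j hij
  by_cases hi : (i : ℕ) < m <;> by_cases hj : (j : ℕ) < m
  · rw [bp_apply_lt m hm D hD hi, bp_apply_lt m hm D hD hj] at hij
    have hval : m - 1 - (i : ℕ) = m - 1 - (j : ℕ) :=
      congrArg Fin.val ((Dᶜ.orderEmbOfFin _).injective hij)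
    exact Fin.ext (by omega)
  · have h1 := bp_mem_compl m hm D hD hi
    rw [hij] at h1
    exact absurd (bp_mem m hm D hD hj) (Finset.mem_compl.mp h1)
  · have h1 := bp_mem_compl m hm D hD hj
    rw [← hij] at h1
    exact absurd (bp_mem m hm D hD hi) (Finset.mem_compl.mp h1)
  · rw [bp_apply_ge m hm D hD hi, bp_apply_ge m hm D hD hj] at hij
    have hval : (i : ℕ) - m = (j : ℕ) - m :=
      congrArg Fin.val ((D.orderEmbOfFin hD).injective hij)
    have hi' := i.isLt
    have hj' := j.isLt
    exact Fin.ext (by omega)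

noncomputable def bpPerm : Equiv.Perm (Fin n) :=
  Equiv.ofBijective _ (Finite.injective_iff_bijective.mp (bp_injective m hm D hD))

lemma bpPerm_apply (i : Fin n) : bpPerm m hm D hD i = bp m hm D hD i := rfl

end Stmt4Aux


open Stmt4Aux Finset in
/-- Theorem 2 (key lemma): given an acyclic orientation `r` of a finite simple graph `G` on
`n` vertices with `s` sinks, and a bijective labeling `ω` decreasing along directed paths with
the sinks receiving the smallest labels, for each `1 ≤ k ≤ n` the number of permutations
`σ ∈ L'(𝔬, ω)` with descent set `{1,…,n-k}` (0-indexed: `{0,…,n-k-1}`) is `C(s-1, k-1)`. -/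
theorem stmt4 {V : Type} [Fintype V] (G : SimpleGraph V) (r : V → V → Prop)
    (h1 : ∀ u v : V, r u v → G.Adj u v)
    (h2 : ∀ u v : V, G.Adj u v → r u v ∨ r v u)
    (h3 : ∀ u v : V, ¬(r u v ∧ r v u))
    (hacyc : ∀ v : V, ¬ Relation.TransGen r v v)
    (n : ℕ) (hn : Fintype.card V = n) (ω : V ≃ Fin n)
    (hdec : ∀ u v : V, Relation.TransGen r u v → (ω v : ℕ) < (ω u : ℕ))
    (s : ℕ) (hs : s = Nat.card {v : V // IsSink r v})
    (hmin : ∀ v : V, IsSink r v → (ω v : ℕ) < s)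
    (k : ℕ) (hk : 1 ≤ k) (hkn : k ≤ n) :
    Nat.card {σ : Equiv.Perm (Fin n) //
        InLE r ω σ ∧ Des (σ : Fin n → Fin n) = {i | i < n - k}} =
      Nat.choose (s - 1) (k - 1) := by
  classical
  have hn1 : 1 ≤ n := le_trans hk hkn
  haveI : NeZero n := ⟨by omega⟩
  set m := n - k with hm_def
  have hmn : m < n := by omega
  -- the vertex labeled 0 is a sink
  have hz : IsSink r (ω.symm 0) := by
    intro u hu
    have h := hdec _ u (Relation.TransGen.single hu)
    rw [Equiv.apply_symm_apply, Fin.val_zero] at h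
    omega
  have hs_pos : 0 < s := by
    have := hmin _ hz
    omega
  have hs_le_n : s ≤ n := by
    have hle : Fintype.card {v : V // IsSink r v} ≤ Fintype.card V :=
      Fintype.card_subtype_le _
    rw [hs, Nat.card_eq_fintype_card]
    omega
  -- labels below s are exactly sinks
  have hsink0 : ∀ x : Fin n, (x : ℕ) < s → IsSink r (ω.symm x) := by
    have gbij : Function.Bijective
        (fun v : {v : V // IsSink r v} => (⟨(ω v.1 : ℕ), hmin _ v.2⟩ : Fin s)) := by
      rw [Fintype.bijective_iff_injective_and_card]
      constructor
      · intro a b hab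
        have h1 := congrArg Fin.val hab
        exact Subtype.ext (ω.injective (Fin.ext h1))
      · rw [Fintype.card_fin, ← Nat.card_eq_fintype_card, ← hs]
    intro x hx
    obtain ⟨v, hv⟩ := gbij.2 ⟨(x : ℕ), hx⟩
    have hval := congrArg Fin.val hv
    have hωv : ω v.1 = x := Fin.ext hval
    have hvx : ω.symm x = v.1 := by rw [← hωv, Equiv.symm_apply_apply]
    rw [hvx]
    exact v.2
  -- the finset of "nonzero sink labels"
  set S : Finset (Fin n) := (Finset.Ico 1 s).attachFin
      (fun a ha => by have := (Finset.mem_Ico.mp ha).2; omega) with hS_def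
  have hSmem : ∀ x : Fin n, x ∈ S ↔ 1 ≤ (x : ℕ) ∧ (x : ℕ) < s := by
    intro x
    rw [hS_def, Finset.mem_attachFin, Finset.mem_Ico]
  have hScard : S.card = s - 1 := by
    rw [hS_def, Finset.card_attachFin, Nat.card_Ico]
  -- the tail set of a permutation
  set tailSet : Equiv.Perm (Fin n) → Finset (Fin n) :=
      fun σ => (Finset.univ.filter fun i : Fin n => m < (i : ℕ)).image σ with htailSet
  have htailmem : ∀ (σ : Equiv.Perm (Fin n)) (x : Fin n),
      x ∈ tailSet σ ↔ ∃ i : Fin n, m < (i : ℕ) ∧ σ i = x := by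
    intro σ x
    rw [htailSet]
    simp only [Finset.mem_image, Finset.mem_filter, Finset.mem_univ, true_and]
  have hfiltercard : (Finset.univ.filter fun i : Fin n => m < (i : ℕ)).card = k - 1 := by
    have heq : (Finset.univ.filter fun i : Fin n => m < (i : ℕ)) =
        (Finset.Ico (m + 1) n).attachFin (fun a ha => (Finset.mem_Ico.mp ha).2) := by
      ext x
      rw [Finset.mem_attachFin, Finset.mem_Ico, Finset.mem_filter]
      have := x.isLt
      constructor
      · rintro ⟨-, h⟩; omega
      · rintro ⟨h, -⟩; exact ⟨Finset.mem_univ _, by omega⟩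
    rw [heq, Finset.card_attachFin, Nat.card_Ico]
    omega
  -- ====== direction 1 : from a subset to a permutation ======
  have F1 : ∀ T : Finset (Fin n), T ∈ S.powersetCard (k - 1) →
      ∃ hD : (insert (0 : Fin n) T).card = n - m,
        (InLE r ω (bpPerm m hmn _ hD) ∧
          Des ⇑(bpPerm m hmn _ hD) = {i | i < m}) ∧
        tailSet (bpPerm m hmn _ hD) = T := by
    intro T hT
    obtain ⟨hTS, hTcard⟩ := Finset.mem_powersetCard.mp hT
    have h0T : (0 : Fin n) ∉ T := by
      intro h
      have h' := (hSmem _).mp (hTS h)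
      rw [Fin.val_zero] at h'
      omega
    have hD : (insert (0 : Fin n) T).card = n - m := by
      rw [Finset.card_insert_of_notMem h0T, hTcard]
      omega
    set D := insert (0 : Fin n) T with hD_def
    have h0D : (0 : Fin n) ∈ D := Finset.mem_insert_self _ _
    have hDs : ∀ x : Fin n, x ∈ D → (x : ℕ) < s := by
      intro x hx
      rcases Finset.mem_insert.mp hx with h | h
      · subst h; rw [Fin.val_zero]; omega
      · exact ((hSmem _).mp (hTS h)).2
    refine ⟨hD, ⟨?_, ?_⟩, ?_⟩
    · -- InLE
      intro i j hpath
      rw [bpPerm_apply, bpPerm_apply] at hpath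
      by_contra hji
      have hji' : (j : ℕ) ≤ (i : ℕ) := by
        rw [Fin.lt_def] at hji; omega
      rcases Nat.eq_or_lt_of_le hji' with heq | hlt
      · have : i = j := Fin.ext heq.symm
        subst this
        exact hacyc _ hpath
      · have hd := hdec _ _ hpath
        rw [Equiv.apply_symm_apply, Equiv.apply_symm_apply] at hd
        by_cases hi : (i : ℕ) < m
        · have hba := bp_anti m hmn D hD hlt hi
          rw [Fin.lt_def] at hba
          omega
        · have hmem := bp_mem m hmn D hD hi
          have hsink := hsink0 _ (hDs _ hmem)
          obtain ⟨c, hc, -⟩ := Relation.TransGen.head'_iff.mp hpath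
          exact hsink c hc
    · -- descent set
      ext i
      simp only [Des, Set.mem_setOf_eq]
      constructor
      · rintro ⟨hi, hlt⟩
        by_contra him
        rw [bpPerm_apply, bpPerm_apply] at hlt
        have hmo := bp_mono m hmn D hD (i := ⟨i, Nat.lt_of_succ_lt hi⟩) (j := ⟨i + 1, hi⟩)
          (show ¬ i < m from him) (show i < i + 1 by omega)
        exact absurd hlt (lt_asymm hmo)
      · intro him
        have hi : i + 1 < n := by omega
        refine ⟨hi, ?_⟩
        rw [bpPerm_apply, bpPerm_apply]
        by_cases hi1 : i + 1 < m
        · exact bp_anti m hmn D hD (show i < i + 1 by omega) (show i + 1 < m from hi1)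
        · have hi1' : i + 1 = m := by omega
          have hv : bp m hmn D hD ⟨i + 1, hi⟩ = 0 :=
            bp_valley m hmn D hD h0D (show i + 1 = m from hi1')
          rw [hv]
          have hne : bp m hmn D hD ⟨i, Nat.lt_of_succ_lt hi⟩ ≠ 0 := by
            intro h
            have hmem := bp_mem_compl m hmn D hD (i := ⟨i, Nat.lt_of_succ_lt hi⟩)
              (show i < m from him)
            rw [h] at hmem
            exact (Finset.mem_compl.mp hmem) h0D
          exact (Fin.pos_iff_ne_zero' _).mpr hne
    · -- tailSet equals T
      ext x
      rw [htailmem]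
      constructor
      · rintro ⟨i, hi, rfl⟩
        rw [bpPerm_apply]
        have hmem := bp_mem m hmn D hD (i := i) (by omega)
        rcases Finset.mem_insert.mp hmem with h | h
        · exfalso
          have hv : bp m hmn D hD ⟨m, hmn⟩ = 0 :=
            bp_valley m hmn D hD h0D rfl
          have heq := bp_injective m hmn D hD (h.trans hv.symm)
          have hval : (i : ℕ) = m := congrArg Fin.val heq
          omega
        · exact h
      · intro hx
        have hxD : x ∈ D := Finset.mem_insert_of_mem hx
        have hrange : x ∈ Set.range ⇑(D.orderEmbOfFin hD) := by
          rw [Finset.range_orderEmbOfFin]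
          exact hxD
        obtain ⟨l, hl⟩ := hrange
        have h0' : 0 < n - m := by omega
        have hlne : (l : ℕ) ≠ 0 := by
          intro h0
          have hmin0 : D.orderEmbOfFin hD ⟨0, h0'⟩ = 0 := by
            rw [Finset.orderEmbOfFin_zero]
            exact le_antisymm (Finset.min'_le _ _ h0D) (Fin.zero_le _)
          have hx0 : x = 0 := by
            rw [← hl, show l = ⟨0, h0'⟩ from Fin.ext h0]
            exact hmin0
          rw [hx0] at hx
          exact h0T hx
        have hln := l.isLt
        refine ⟨⟨m + (l : ℕ), by omega⟩, show m < m + (l : ℕ) by omega, ?_⟩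
        rw [bpPerm_apply, bp_apply_ge m hmn D hD (show ¬ m + (l : ℕ) < m by omega)]
        refine (orderEmb_congr D hD _ l.isLt (show m + (l : ℕ) - m = (l : ℕ) by omega)).trans ?_
        rw [Fin.eta]
        exact hl
  -- ====== direction 2 : from a permutation to a subset ======
  have F2 : ∀ σ : Equiv.Perm (Fin n), InLE r ω σ → Des (σ : Fin n → Fin n) = {i | i < m} →
      (tailSet σ ∈ S.powersetCard (k - 1)) ∧
      ∃ hD : (insert (0 : Fin n) (tailSet σ)).card = n - m,
        bpPerm m hmn _ hD = σ := by
    intro σ hIn hDes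
    have hstep : ∀ i : ℕ, (hi : i + 1 < n) →
        ((σ ⟨i + 1, hi⟩ < σ ⟨i, Nat.lt_of_succ_lt hi⟩) ↔ i < m) := by
      intro i hi
      constructor
      · intro h
        have hmem : i ∈ Des ⇑σ := ⟨hi, h⟩
        rw [hDes] at hmem
        exact hmem
      · intro h
        have hmem : i ∈ Des ⇑σ := by rw [hDes]; exact h
        obtain ⟨hi', hlt⟩ := hmem
        exact hlt
    have hdec2 : ∀ a b : ℕ, (hb : b < n) → (hab : a < b) → (hbm : b ≤ m) →
        σ ⟨b, hb⟩ < σ ⟨a, by omega⟩ := by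
      intro a b hb hab hbm
      exact lt_of_steps (⇑σ) b a hb hab
        (fun i hi1 hi2 => (hstep i (by omega)).mpr (by omega))
    have hinc2 : ∀ a b : ℕ, (hb : b < n) → (hma : m ≤ a) → (hab : a < b) →
        σ ⟨a, by omega⟩ < σ ⟨b, hb⟩ := by
      intro a b hb hma hab
      refine gt_of_steps (⇑σ) b a hb hab (fun i hi1 hi2 => ?_)
      have hnd : ¬ (σ ⟨i + 1, by omega⟩ < σ ⟨i, by omega⟩) := by
        intro h
        have := (hstep i (by omega)).mp h
        omega
      refine lt_of_le_of_ne (not_lt.mp hnd) ?_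
      intro h
      have h2 : i = i + 1 := congrArg Fin.val (σ.injective h)
      omega
    have hvalley : σ ⟨m, hmn⟩ = 0 := by
      set p := σ.symm 0 with hp
      have hσp : σ p = 0 := σ.apply_symm_apply 0
      have hpl := p.isLt
      rcases Nat.lt_trichotomy (p : ℕ) m with hc | hc | hc
      · exfalso
        have hlt := hdec2 (p : ℕ) m hmn hc le_rfl
        rw [Fin.eta, hσp] at hlt
        exact absurd hlt (not_lt.mpr (Fin.zero_le _))
      · have heq : (⟨m, hmn⟩ : Fin n) = p := Fin.ext (show m = (p : ℕ) by omega)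
        rw [heq, hσp]
      · exfalso
        have hlt := hinc2 m (p : ℕ) hpl le_rfl hc
        rw [Fin.eta, hσp] at hlt
        exact absurd hlt (not_lt.mpr (Fin.zero_le _))
    have htailsink : ∀ i : Fin n, m < (i : ℕ) → IsSink r (ω.symm (σ i)) := by
      intro i him u hu
      set j := σ.symm (ω u) with hj
      have hσj : ω.symm (σ j) = u := by rw [hj, σ.apply_symm_apply, Equiv.symm_apply_apply]
      have hij : i < j := hIn i j (by rw [hσj]; exact Relation.TransGen.single hu)
      have hd := hdec _ u (Relation.TransGen.single hu)
      rw [Equiv.apply_symm_apply] at hd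
      have hσju : (σ j : ℕ) = (ω u : ℕ) := by rw [hj, σ.apply_symm_apply]
      have hjl := j.isLt
      have hlt := hinc2 (i : ℕ) (j : ℕ) hjl (by omega) (by rwa [Fin.lt_def] at hij)
      rw [Fin.eta, Fin.eta, Fin.lt_def] at hlt
      omega
    have h0tail : (0 : Fin n) ∉ tailSet σ := by
      rw [htailmem]
      rintro ⟨i, hi, h0⟩
      have heq : i = ⟨m, hmn⟩ := σ.injective (h0.trans hvalley.symm)
      have hval : (i : ℕ) = m := congrArg Fin.val heq
      omega
    have htail_sub : tailSet σ ⊆ S := by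
      intro x hx
      rw [htailmem] at hx
      obtain ⟨i, hi, rfl⟩ := hx
      rw [hSmem]
      constructor
      · by_contra h
        have hx0 : σ i = 0 := by
          rw [Fin.ext_iff, Fin.val_zero]
          omega
        have heq : i = ⟨m, hmn⟩ := σ.injective (hx0.trans hvalley.symm)
        have hval : (i : ℕ) = m := congrArg Fin.val heq
        omega
      · have := hmin _ (htailsink i hi)
        rwa [Equiv.apply_symm_apply] at this
    have htail_card : (tailSet σ).card = k - 1 := by
      rw [htailSet]
      rw [Finset.card_image_of_injective _ σ.injective]
      exact hfiltercard
    have hmemP : tailSet σ ∈ S.powersetCard (k - 1) :=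
      Finset.mem_powersetCard.mpr ⟨htail_sub, htail_card⟩
    have hD : (insert (0 : Fin n) (tailSet σ)).card = n - m := by
      rw [Finset.card_insert_of_notMem h0tail, htail_card]
      omega
    refine ⟨hmemP, hD, ?_⟩
    set D := insert (0 : Fin n) (tailSet σ) with hD_def
    have hmemD : ∀ i : Fin n, ¬ (i : ℕ) < m → σ i ∈ D := by
      intro i hi
      rcases Nat.eq_or_lt_of_le (not_lt.mp hi) with h | h
      · have heq : i = ⟨m, hmn⟩ := Fin.ext (show (i : ℕ) = m by omega)
        rw [heq, hvalley]
        exact Finset.mem_insert_self _ _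
      · refine Finset.mem_insert_of_mem ?_
        rw [htailmem]
        exact ⟨i, h, rfl⟩
    have hmemC : ∀ i : Fin n, (i : ℕ) < m → σ i ∈ Dᶜ := by
      intro i hi
      rw [Finset.mem_compl]
      intro h
      rcases Finset.mem_insert.mp h with h | h
      · have heq : i = ⟨m, hmn⟩ := σ.injective (h.trans hvalley.symm)
        have hval : (i : ℕ) = m := congrArg Fin.val heq
        omega
      · rw [htailmem] at h
        obtain ⟨i', hi', hii'⟩ := h
        have : i' = i := σ.injective hii'
        subst this
        omega
    apply Equiv.ext
    intro i
    rw [bpPerm_apply]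
    have hil := i.isLt
    by_cases hi : (i : ℕ) < m
    · rw [bp_apply_lt m hmn D hD hi]
      have hf := Finset.orderEmbOfFin_unique (card_compl_eq m hmn D hD)
        (f := fun l : Fin m => σ ⟨m - 1 - (l : ℕ), by omega⟩)
        (fun l => hmemC _ (show m - 1 - (l : ℕ) < m by omega))
        (fun l1 l2 hl => by
          have hl' : (l1 : ℕ) < (l2 : ℕ) := hl
          have hl2 := l2.isLt
          exact hdec2 (m - 1 - (l2 : ℕ)) (m - 1 - (l1 : ℕ)) (by omega) (by omega) (by omega))
      rw [← hf]
      exact congrArg σ (Fin.ext (show m - 1 - (m - 1 - (i : ℕ)) = (i : ℕ) by omega))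
    · rw [bp_apply_ge m hmn D hD hi]
      have hg := Finset.orderEmbOfFin_unique hD
        (f := fun l : Fin (n - m) => σ ⟨m + (l : ℕ), by have := l.isLt; omega⟩)
        (fun l => hmemD _ (show ¬ m + (l : ℕ) < m by omega))
        (fun l1 l2 hl => by
          have hl' : (l1 : ℕ) < (l2 : ℕ) := hl
          have hl2 := l2.isLt
          exact hinc2 (m + (l1 : ℕ)) (m + (l2 : ℕ)) (by omega) (by omega) (by omega))
      rw [← hg]
      exact congrArg σ (Fin.ext (show m + ((i : ℕ) - m) = (i : ℕ) by omega))
  -- ====== assemble the bijection ======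
  have key : Nat.card {σ : Equiv.Perm (Fin n) //
      InLE r ω σ ∧ Des (σ : Fin n → Fin n) = {i | i < m}} =
      Nat.card {T : Finset (Fin n) // T ∈ S.powersetCard (k - 1)} := by
    apply Nat.card_congr
    refine Equiv.ofBijective (fun σ => ⟨tailSet σ.1, (F2 σ.1 σ.2.1 σ.2.2).1⟩) ⟨?_, ?_⟩
    · rintro ⟨σ1, hσ1⟩ ⟨σ2, hσ2⟩ heq
      have heq' : tailSet σ1 = tailSet σ2 := congrArg Subtype.val heq
      obtain ⟨hD2, hb2⟩ := (F2 σ2 hσ2.1 hσ2.2).2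
      obtain ⟨hD1, hb1⟩ := (F2 σ1 hσ1.1 hσ1.2).2
      apply Subtype.ext
      show σ1 = σ2
      revert hD1
      rw [heq']
      intro hD1' hb1'
      exact hb1'.symm.trans hb2
    · rintro ⟨T, hT⟩
      obtain ⟨hD, hP, htl⟩ := F1 T hT
      exact ⟨⟨bpPerm m hmn _ hD, hP⟩, Subtype.ext htl⟩
  rw [key, Nat.card_eq_finsetCard, Finset.card_powersetCard, hScard]
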